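/- Let X and Y be Banach spaces, A ⊆ X an open set, W ⊆ X an n-dimensional subspace, and K ⊆ W ∩ A compact. Let F ∈ C¹(A, Y) (Fréchet differentiable with continuous derivative) be such that F restricted to K is injective and F′(x) is injective on W for every x ∈ W ∩ A. Then there exists C > 0 such that ‖x − y‖_X ≤ C ‖F(x) − F(y)‖_Y for all x, y ∈ K. -/

import Mathlib

open Filter Metric Topology

theorem stmt2 {X Y : Type*} [NormedAddCommGroup X] [NormedSpace ℝ X] [CompleteSpace X]
    [NormedAddCommGroup Y] [NormedSpace ℝ Y] [CompleteSpace Y]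
    (A : Set X) (hA : IsOpen A) (n : ℕ) (W : Subspace ℝ X) [FiniteDimensional ℝ W]
    (hW : Module.finrank ℝ W = n)
    (K : Set X) (hK : IsCompact K) (hKWA : K ⊆ ↑W ∩ A)
    (F : X → Y) (F' : X → X →L[ℝ] Y)
    (hder : ∀ x ∈ A, HasFDerivAt F (F' x) x) (hcont : ContinuousOn F' A)
    (hinjF : Set.InjOn F K)
    (hinjF' : ∀ x ∈ (↑W : Set X) ∩ A, Set.InjOn (F' x) ↑W) :
    ∃ C > 0, ∀ x ∈ K, ∀ y ∈ K, ‖x - y‖ ≤ C * ‖F x - F y‖ := by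
  by_contra h
  push_neg at h
  have hneg : ∀ m : ℕ, ∃ x ∈ K, ∃ y ∈ K, ((m : ℝ) + 1) * ‖F x - F y‖ < ‖x - y‖ := by
    intro m
    exact h ((m : ℝ) + 1) (by positivity)
  choose x hx y hy hlt using hneg
  -- extract convergent subsequences
  obtain ⟨a, haK, φ, hφ, hxa⟩ := hK.tendsto_subseq hx
  obtain ⟨b, hbK, ψ, hψ, hyb⟩ := hK.tendsto_subseq (fun m => hy (φ m))
  set χ : ℕ → ℕ := φ ∘ ψ with hχ
  have hχmono : StrictMono χ := hφ.comp hψ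
  set u : ℕ → X := fun m => x (χ m) with hu
  set v : ℕ → X := fun m => y (χ m) with hv
  have hua : Tendsto u atTop (𝓝 a) := hxa.comp hψ.tendsto_atTop
  have hvb : Tendsto v atTop (𝓝 b) := hyb
  have haA : a ∈ A := (hKWA haK).2
  have hbA : b ∈ A := (hKWA hbK).2
  have haW : a ∈ (W : Set X) := (hKWA haK).1
  -- K is bounded
  obtain ⟨D, hD⟩ := Metric.isBounded_iff.mp hK.isBounded
  have hD0 : 0 ≤ D := by
    have := hD haK haK
    simpa using this
  -- F a = F b
  have hFab : Tendsto (fun m => F (u m) - F (v m)) atTop (𝓝 (F a - F b)) := by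
    have hFa : ContinuousAt F a := (hder a haA).continuousAt
    have hFb : ContinuousAt F b := (hder b hbA).continuousAt
    exact ((hFa.tendsto.comp hua).sub (hFb.tendsto.comp hvb))
  have hnorm0 : Tendsto (fun m => ‖F (u m) - F (v m)‖) atTop (𝓝 0) := by
    have hg : Tendsto (fun m : ℕ => D / ((m : ℝ) + 1)) atTop (𝓝 0) :=
      Tendsto.div_atTop tendsto_const_nhds
        (tendsto_atTop_add_const_right _ 1 tendsto_natCast_atTop_atTop)
    refine squeeze_zero (fun m => norm_nonneg _) (fun m => ?_) hg
    · 
      have hk : (m : ℝ) + 1 ≤ (χ m : ℝ) + 1 := by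
        have := hχmono.le_apply (x := m)
        exact_mod_cast add_le_add_left (Nat.cast_le.mpr this) 1
      have h1 : ((m : ℝ) + 1) * ‖F (u m) - F (v m)‖ ≤ ((χ m : ℝ) + 1) * ‖F (u m) - F (v m)‖ :=
        mul_le_mul_of_nonneg_right hk (norm_nonneg _)
      have h2 : ((χ m : ℝ) + 1) * ‖F (u m) - F (v m)‖ ≤ ‖u m - v m‖ := (hlt (χ m)).le
      have h3 : ‖u m - v m‖ ≤ D := by
        have := hD (hx (χ m)) (hy (χ m))
        rwa [dist_eq_norm] at this
      rw [le_div_iff₀ (by positivity)]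
      linarith [h1.trans (h2.trans h3)]
  have hFeq : F a = F b := by
    have := tendsto_nhds_unique hFab.norm hnorm0
    rwa [norm_eq_zero, sub_eq_zero] at this
  have hab : a = b := hinjF haK hbK hFeq
  subst hab
  -- antilipschitz constant for F' a on W
  set S : W →ₗ[ℝ] Y := (F' a).toLinearMap.comp W.subtype with hS
  have hSker : LinearMap.ker S = ⊥ := by
    rw [LinearMap.ker_eq_bot]
    intro p q hpq
    exact Subtype.ext (hinjF' a ⟨haW, haA⟩ p.2 q.2 hpq)
  obtain ⟨c, hc0, hanti⟩ := S.exists_antilipschitzWith hSker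
  set cc : ℝ := (c : ℝ) with hcc
  have hcc0 : 0 < cc := by exact_mod_cast hc0
  set ε : ℝ := 1 / (2 * cc) with hε
  have hε0 : 0 < ε := by positivity
  -- find δ
  have hcontA : ContinuousAt F' a := hcont.continuousAt (hA.mem_nhds haA)
  have hev1 : ∀ᶠ z in 𝓝 a, ‖F' z - F' a‖ < ε := by
    have := hcontA (Metric.ball_mem_nhds (F' a) hε0)
    filter_upwards [this] with z hz
    have hz' : dist (F' z) (F' a) < ε := hz
    rwa [dist_eq_norm] at hz'
  have hev2 : ∀ᶠ z in 𝓝 a, z ∈ A := hA.mem_nhds haA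
  obtain ⟨δ, hδ0, hδ⟩ := Metric.eventually_nhds_iff_ball.mp (hev1.and hev2)
  -- key quantitative estimate on the ball
  have key : ∀ x' ∈ K, ∀ y' ∈ K, x' ∈ Metric.ball a δ → y' ∈ Metric.ball a δ →
      ‖x' - y'‖ ≤ 2 * cc * ‖F x' - F y'‖ := by
    intro x' hx'K y' hy'K hx'b hy'b
    have hmvt : ‖(F x' - F' a x') - (F y' - F' a y')‖ ≤ ε * ‖x' - y'‖ := by
      refine Convex.norm_image_sub_le_of_norm_hasFDerivWithin_le
        (f := fun z => F z - F' a z) (f' := fun z => F' z - F' a) (s := Metric.ball a δ)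
        (fun z hz => ((hder z (hδ z hz).2).sub (F' a).hasFDerivAt).hasFDerivWithinAt)
        (fun z hz => (hδ z hz).1.le) (convex_ball a δ) hy'b hx'b
    set w : W := ⟨x' - y', W.sub_mem (hKWA hx'K).1 (hKWA hy'K).1⟩ with hw
    have hal : ‖x' - y'‖ ≤ cc * ‖F' a (x' - y')‖ := by
      have := hanti.le_mul_dist w 0
      simpa [hS, dist_eq_norm, hw] using this
    have htri : ‖F' a (x' - y')‖ ≤ ‖F x' - F y'‖ + ε * ‖x' - y'‖ := by
      have h1 : ‖F' a (x' - y')‖ ≤ ‖F x' - F y'‖ + ‖(F x' - F' a x') - (F y' - F' a y')‖ := by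
        have : F' a (x' - y') = (F x' - F y') - ((F x' - F' a x') - (F y' - F' a y')) := by
          rw [map_sub]; abel
        rw [this]
        exact (norm_sub_le _ _)
      linarith
    have : ‖x' - y'‖ ≤ cc * ‖F x' - F y'‖ + cc * ε * ‖x' - y'‖ := by
      calc ‖x' - y'‖ ≤ cc * (‖F x' - F y'‖ + ε * ‖x' - y'‖) :=
            hal.trans (mul_le_mul_of_nonneg_left htri hcc0.le)
        _ = cc * ‖F x' - F y'‖ + cc * ε * ‖x' - y'‖ := by ring
    have hcε : cc * ε * ‖x' - y'‖ = (1 / 2) * ‖x' - y'‖ := by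
      have : cc * ε = 1 / 2 := by rw [hε]; field_simp
      rw [this]
    linarith [this, hcε]
  -- derive contradiction for large m
  have hbig : ∀ᶠ m : ℕ in atTop, u m ∈ Metric.ball a δ ∧ v m ∈ Metric.ball a δ ∧
      2 * cc ≤ (m : ℝ) := by
    have h1 : ∀ᶠ m : ℕ in atTop, u m ∈ Metric.ball a δ :=
      hua.eventually (Metric.eventually_nhds_iff_ball.mpr ⟨δ, hδ0, fun _ h => h⟩)
    have h2 : ∀ᶠ m : ℕ in atTop, v m ∈ Metric.ball a δ :=
      hvb.eventually (Metric.eventually_nhds_iff_ball.mpr ⟨δ, hδ0, fun _ h => h⟩)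
    have h3 : ∀ᶠ m : ℕ in atTop, 2 * cc ≤ (m : ℝ) := by
      filter_upwards [eventually_ge_atTop ⌈2 * cc⌉₊] with m hm
      exact (Nat.le_ceil _).trans (by exact_mod_cast hm)
    filter_upwards [h1, h2, h3] with m hm1 hm2 hm3
    exact ⟨hm1, hm2, hm3⟩
  obtain ⟨m, hm1, hm2, hm3⟩ := hbig.exists
  have hkey := key (u m) (hx (χ m)) (v m) (hy (χ m)) hm1 hm2
  have hltm := hlt (χ m)
  have hχge : (m : ℝ) ≤ (χ m : ℝ) := by exact_mod_cast hχmono.le_apply (x := m)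
  have hq0 : 0 ≤ ‖F (u m) - F (v m)‖ := norm_nonneg _
  -- (χ m + 1) ‖F u - F v‖ < ‖u - v‖ ≤ 2 cc ‖F u - F v‖, with χ m + 1 > 2 cc
  have hmul : 2 * cc * ‖F (u m) - F (v m)‖ ≤ (χ m : ℝ) * ‖F (u m) - F (v m)‖ :=
    mul_le_mul_of_nonneg_right (hm3.trans hχge) hq0
  have hexpand : ((χ m : ℝ) + 1) * ‖F (u m) - F (v m)‖
      = (χ m : ℝ) * ‖F (u m) - F (v m)‖ + ‖F (u m) - F (v m)‖ := by ring
  linarith [hltm, hkey, hmul, hexpand, hq0]
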